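/- Fix ω ∈ ℂ with ω ∉ ℝ, let Γ = {m + nω : m, n ∈ ℤ}, and let P : ℂ∖Γ → ℂ be holomorphic and Γ-periodic such that the function z ↦ z²·P(z) extends holomorphically to a neighborhood of 0 and the derivative of this extension vanishes at 0 (i.e. P has a pole of order at most two with vanishing residue at each lattice point). Let p1, p2 ∈ ℂ, let ω_k ∈ {1, ω}, and let ξ ∈ ℂ be such that the boundary of the parallelogram Q = {ξ − p1 + s·ω_k + t·(p1 − p2) : s, t ∈ [0,1]} does not meet Γ. Then ∫_{[ξ, ξ+ω_k]} ( P(ζ − p1) − P(ζ − p2) ) dζ = 0. -/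

import Mathlib

open Complex Metric Set

/-- The lattice `Γ = {m + n·ω : m, n ∈ ℤ}` associated to `ω`. -/
def lattice (ω : ℂ) : Set ℂ := {z : ℂ | ∃ m n : ℤ, z = (m : ℂ) + (n : ℂ) * ω}

open MeasureTheory intervalIntegral

lemma lat_add {ω z w : ℂ} (hz : z ∈ lattice ω) (hw : w ∈ lattice ω) : z + w ∈ lattice ω := by
  obtain ⟨m, n, rfl⟩ := hz; obtain ⟨m', n', rfl⟩ := hw
  exact ⟨m + m', n + n', by push_cast; ring⟩

lemma lat_sub {ω z w : ℂ} (hz : z ∈ lattice ω) (hw : w ∈ lattice ω) : z - w ∈ lattice ω := by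
  obtain ⟨m, n, rfl⟩ := hz; obtain ⟨m', n', rfl⟩ := hw
  exact ⟨m - m', n - n', by push_cast; ring⟩

lemma lat_zero {ω : ℂ} : (0:ℂ) ∈ lattice ω := ⟨0, 0, by simp⟩

lemma lat_one {ω : ℂ} : (1:ℂ) ∈ lattice ω := ⟨1, 0, by simp⟩

lemma lat_omega {ω : ℂ} : ω ∈ lattice ω := ⟨0, 1, by simp⟩

lemma lat_int {ω : ℂ} (m : ℤ) : (m:ℂ) ∈ lattice ω := ⟨m, 0, by simp⟩

lemma lat_int_omega {ω : ℂ} (n : ℤ) : (n:ℂ) * ω ∈ lattice ω := ⟨0, n, by simp⟩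

lemma lat_norm {ω : ℂ} (hω : ω.im ≠ 0) {z : ℂ} (hz : z ∈ lattice ω) (h0 : z ≠ 0) :
    min 1 |ω.im| ≤ ‖z‖ := by
  obtain ⟨m, n, rfl⟩ := hz
  rcases eq_or_ne n 0 with rfl | hn
  · simp only [Int.cast_zero, zero_mul, add_zero] at h0 ⊢
    have hm : m ≠ 0 := by simpa using h0
    have : (1:ℝ) ≤ |(m:ℝ)| := by exact_mod_cast Int.one_le_abs (by simpa using hm)
    calc min 1 |ω.im| ≤ 1 := min_le_left _ _
      _ ≤ |(m:ℝ)| := this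
      _ = ‖(m:ℂ)‖ := by rw [Complex.norm_intCast]
  · have him : ((m:ℂ) + (n:ℂ)*ω).im = n * ω.im := by simp
    have h1 : |ω.im| ≤ |(n:ℝ)| * |ω.im| := by
      have : (1:ℝ) ≤ |(n:ℝ)| := by exact_mod_cast Int.one_le_abs hn
      nlinarith [abs_nonneg ω.im]
    calc min 1 |ω.im| ≤ |ω.im| := min_le_right _ _
      _ ≤ |(n:ℝ)| * |ω.im| := h1
      _ = |((m:ℂ) + (n:ℂ)*ω).im| := by rw [him, abs_mul]
      _ ≤ ‖(m:ℂ) + (n:ℂ)*ω‖ := Complex.abs_im_le_norm _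

lemma lat_closed {ω : ℂ} (hω : ω.im ≠ 0) : IsClosed (lattice ω) := by
  set r := min 1 |ω.im| with hr
  have hr0 : 0 < r := lt_min one_pos (abs_pos.mpr hω)
  rw [← isOpen_compl_iff]
  rw [isOpen_iff_forall_mem_open]
  intro z hz
  by_cases h : ∃ γ ∈ lattice ω, dist z γ < r/2
  · obtain ⟨γ, hγ, hd⟩ := h
    have hzγ : z ≠ γ := fun h => hz (h ▸ hγ)
    refine ⟨ball z (dist z γ), ?_, isOpen_ball, mem_ball_self (dist_pos.mpr hzγ)⟩
    intro w hw hwl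
    have hne : w ≠ γ := by
      rintro rfl; rw [mem_ball, dist_comm] at hw; exact absurd hw (lt_irrefl _)
    have := lat_norm hω (lat_sub hwl hγ) (sub_ne_zero.mpr hne)
    have hd2 : dist w γ < r := by
      calc dist w γ ≤ dist w z + dist z γ := dist_triangle _ _ _
        _ < dist z γ + dist z γ := by simp only [mem_ball] at hw; linarith [hw]
        _ < r := by linarith
    rw [dist_eq_norm] at hd2
    linarith [this]
  · push_neg at h
    refine ⟨ball z (r/2), ?_, isOpen_ball, mem_ball_self (by linarith)⟩
    intro w hw hwl
    have := h w hwl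
    rw [mem_ball, dist_comm] at hw
    linarith

lemma lat_finite {ω : ℂ} (hω : ω.im ≠ 0) {K : Set ℂ} (hK : IsCompact K) :
    (lattice ω ∩ K).Finite := by
  obtain ⟨M, hM⟩ := hK.isBounded.subset_closedBall 0
  set B₂ : ℤ := ⌊M / |ω.im|⌋ with hB2
  set B₁ : ℤ := ⌊M + (B₂:ℝ) * |ω.re|⌋ with hB1
  have hsub : lattice ω ∩ K ⊆
      (fun p : ℤ × ℤ => ((p.1:ℂ) + (p.2:ℂ) * ω)) '' (Set.Icc (-B₁) B₁ ×ˢ Set.Icc (-B₂) B₂) := by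
    rintro z ⟨⟨m, n, rfl⟩, hzK⟩
    have hnorm : ‖(m:ℂ) + (n:ℂ)*ω‖ ≤ M := by
      have := hM hzK; simpa [mem_closedBall, Complex.dist_eq] using this
    have him : |(n:ℝ)| * |ω.im| ≤ M := by
      have h1 : |((m:ℂ) + (n:ℂ)*ω).im| ≤ M := le_trans (Complex.abs_im_le_norm _) hnorm
      simpa [abs_mul] using h1
    have hn : |(n:ℝ)| ≤ M / |ω.im| := (le_div_iff₀ (abs_pos.mpr hω)).mpr him
    have hnB : |n| ≤ B₂ := by
      have : ((|n|:ℤ):ℝ) ≤ M / |ω.im| := by push_cast; exact hn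
      exact Int.le_floor.mpr this
    have hre : |(m:ℝ) + n * ω.re| ≤ M := by
      have h1 : |((m:ℂ) + (n:ℂ)*ω).re| ≤ M := le_trans (Complex.abs_re_le_norm _) hnorm
      simpa using h1
    have hnBr : |(n:ℝ)| ≤ (B₂:ℝ) := by exact_mod_cast (by exact_mod_cast hnB : ((|n|:ℤ):ℝ) ≤ (B₂:ℝ))
    have hm : |(m:ℝ)| ≤ M + (B₂:ℝ) * |ω.re| := by
      have h2 : |(m:ℝ)| ≤ |(m:ℝ) + n * ω.re| + |(n:ℝ) * ω.re| := by
        calc |(m:ℝ)| = |((m:ℝ) + n * ω.re) - (n:ℝ) * ω.re| := by ring_nf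
          _ ≤ |(m:ℝ) + n * ω.re| + |(n:ℝ) * ω.re| := abs_sub _ _
      have h3 : |(n:ℝ) * ω.re| ≤ (B₂:ℝ) * |ω.re| := by
        rw [abs_mul]; exact mul_le_mul_of_nonneg_right hnBr (abs_nonneg _)
      linarith
    have hmB : |m| ≤ B₁ := by
      have : ((|m|:ℤ):ℝ) ≤ M + (B₂:ℝ) * |ω.re| := by push_cast; exact hm
      exact Int.le_floor.mpr this
    refine ⟨(m, n), ⟨?_, ?_⟩, rfl⟩
    · exact Set.mem_Icc.mpr ⟨neg_le_of_abs_le hmB, le_of_abs_le hmB⟩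
    · exact Set.mem_Icc.mpr ⟨neg_le_of_abs_le hnB, le_of_abs_le hnB⟩
  exact Set.Finite.subset (((Set.finite_Icc _ _).prod (Set.finite_Icc _ _)).image _) hsub

lemma lat_shift {ω z γ : ℂ} (hz : z ∉ lattice ω) (hγ : γ ∈ lattice ω) : z + γ ∉ lattice ω :=
  fun h => hz (by simpa using lat_sub h hγ)

lemma per_lat {ω : ℂ} (P : ℂ → ℂ)
    (hper1 : ∀ z ∉ lattice ω, P (z + 1) = P z)
    (hperω : ∀ z ∉ lattice ω, P (z + ω) = P z) :
    ∀ γ ∈ lattice ω, ∀ z ∉ lattice ω, P (z + γ) = P z := by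
  have hint : ∀ m : ℤ, ∀ z ∉ lattice ω, P (z + m) = P z := by
    intro m
    induction m using Int.induction_on with
    | zero => simp
    | succ m ih =>
      intro z hz
      have h1 : P (z + m + 1) = P (z + m) := hper1 _ (lat_shift hz (lat_int m))
      push_cast
      rw [show z + ((m:ℂ) + 1) = z + m + 1 by ring, h1]
      exact_mod_cast ih z hz
    | pred m ih =>
      intro z hz
      have hmem : z + (-(m:ℂ) - 1) ∉ lattice ω := by
        have : ((-m - 1 : ℤ):ℂ) ∈ lattice ω := lat_int _
        push_cast at this
        exact lat_shift hz this
      have h1 : P (z + (-(m:ℂ) - 1) + 1) = P (z + (-(m:ℂ) - 1)) := hper1 _ hmem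
      have h2 : P (z + (-(m:ℤ):ℂ)) = P z := by exact_mod_cast ih z hz
      push_cast at h2 ⊢
      rw [show z + (-(m:ℂ) - 1) + 1 = z + -(m:ℂ) by ring] at h1
      rw [← h1]
      exact h2
  have homega : ∀ n : ℤ, ∀ z ∉ lattice ω, P (z + n * ω) = P z := by
    intro n
    induction n using Int.induction_on with
    | zero => simp
    | succ n ih =>
      intro z hz
      have h1 : P (z + n * ω + ω) = P (z + n * ω) := hperω _ (lat_shift hz (lat_int_omega n))
      push_cast
      rw [show z + ((n:ℂ) + 1) * ω = z + n * ω + ω by ring, h1]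
      exact_mod_cast ih z hz
    | pred n ih =>
      intro z hz
      have hmem : z + (-(n:ℂ) - 1) * ω ∉ lattice ω := by
        have : ((-n - 1 : ℤ):ℂ) * ω ∈ lattice ω := lat_int_omega _
        push_cast at this
        exact lat_shift hz this
      have h1 : P (z + (-(n:ℂ) - 1) * ω + ω) = P (z + (-(n:ℂ) - 1) * ω) := hperω _ hmem
      have h2 : P (z + (-(n:ℤ):ℂ) * ω) = P z := by exact_mod_cast ih z hz
      push_cast at h2 ⊢
      rw [show z + (-(n:ℂ) - 1) * ω + ω = z + -(n:ℂ) * ω by ring] at h1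
      rw [← h1]
      exact h2
  rintro γ ⟨m, n, rfl⟩ z hz
  have hznω : z + n * ω ∉ lattice ω := lat_shift hz (lat_int_omega n)
  calc P (z + ((m:ℂ) + (n:ℂ) * ω)) = P (z + n * ω + m) := by ring_nf
    _ = P (z + n * ω) := hint m _ hznω
    _ = P z := homega n z hz

lemma affine_hasDerivAt (v w : ℂ) (t : ℝ) :
    HasDerivAt (fun s : ℝ => v + (s:ℂ) * w) w t := by
  have h0 : HasDerivAt (fun s : ℝ => (s:ℂ)) 1 t := by
    simpa using (hasDerivAt_id t).ofReal_comp
  simpa using (h0.mul_const w).const_add v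

lemma pole_edge (a γ v w : ℂ) (hγ : ∀ t : ℝ, t ∈ Set.Icc (0:ℝ) 1 → v + (t:ℂ) * w ≠ γ) :
    ∫ t in (0:ℝ)..1, a / (v + (t:ℂ) * w - γ)^2 * w = a / (v - γ) - a / (v + w - γ) := by
  have h0 : (v + (0:ℝ) * w : ℂ) ≠ γ := hγ 0 (by norm_num)
  have h1 : (v + (1:ℝ) * w : ℂ) ≠ γ := hγ 1 (by norm_num)
  have key : ∀ t ∈ Set.uIcc (0:ℝ) 1,
      HasDerivAt (fun s : ℝ => -a * (v + (s:ℂ) * w - γ)⁻¹)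
        (a / (v + (t:ℂ) * w - γ)^2 * w) t := by
    intro t ht
    rw [Set.uIcc_of_le (by norm_num)] at ht
    have hne : v + (t:ℂ) * w - γ ≠ 0 := sub_ne_zero.mpr (hγ t ht)
    have hd : HasDerivAt (fun s : ℝ => v + (s:ℂ) * w - γ) w t :=
      (affine_hasDerivAt v w t).sub_const γ
    have hinv : HasDerivAt (fun z : ℂ => z⁻¹) (-((v + (t:ℂ)*w - γ) ^ 2)⁻¹) (v + (t:ℂ)*w - γ) :=
      hasDerivAt_inv hne
    have hcomp := HasDerivAt.comp t hinv hd
    have := hcomp.const_mul (-a)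
    exact this.congr_deriv (by ring)
  have hcont : ContinuousOn (fun t : ℝ => a / (v + (t:ℂ) * w - γ)^2 * w) (Set.uIcc (0:ℝ) 1) := by
    rw [Set.uIcc_of_le (by norm_num)]
    apply ContinuousOn.mul _ continuousOn_const
    apply ContinuousOn.div continuousOn_const
    · fun_prop
    · intro t ht
      exact pow_ne_zero 2 (sub_ne_zero.mpr (hγ t ht))
  rw [integral_eq_sub_of_hasDerivAt key (hcont.intervalIntegrable)]
  have e0 : v + ((0:ℝ):ℂ) * w - γ = v - γ := by push_cast; ring
  have e1 : v + ((1:ℝ):ℂ) * w - γ = v + w - γ := by push_cast; ring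
  rw [e0, e1]
  have hv : v - γ ≠ 0 := by rw [← e0]; push_cast; exact sub_ne_zero.mpr (by exact_mod_cast h0)
  have hvw : v + w - γ ≠ 0 := by
    rw [← e1]; push_cast; exact sub_ne_zero.mpr (by simpa using h1)
  field_simp
  ring

set_option maxHeartbeats 1000000

lemma edge_ii' (f : ℂ → ℂ) (U : Set ℂ) (hf : ContinuousOn f U) (g : ℝ → ℂ) (hg : Continuous g)
    (c : ℂ) (hseg : ∀ t : ℝ, t ∈ Set.Icc (0:ℝ) 1 → g t ∈ U) :
    IntervalIntegrable (fun t : ℝ => f (g t) * c) volume 0 1 := by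
  apply ContinuousOn.intervalIntegrable
  rw [Set.uIcc_of_le (by norm_num : (0:ℝ) ≤ 1)]
  apply ContinuousOn.mul _ continuousOn_const
  exact hf.comp hg.continuousOn hseg

lemma edge_ii (f : ℂ → ℂ) (U : Set ℂ) (hf : ContinuousOn f U) (v w c : ℂ)
    (hseg : ∀ t : ℝ, t ∈ Set.Icc (0:ℝ) 1 → v + (t:ℂ) * w ∈ U) :
    IntervalIntegrable (fun t : ℝ => f (v + (t:ℂ) * w) * c) volume 0 1 :=
  edge_ii' f U hf _ (by fun_prop) c hseg

lemma ftc_edge (f : ℂ → ℂ) (U : Set ℂ) (hU : IsOpen U) (hf : DifferentiableOn ℂ f U) (v w : ℂ)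
    (hseg : ∀ t : ℝ, t ∈ Set.Icc (0:ℝ) 1 → v + (t:ℂ) * w ∈ U) :
    ∫ t in (0:ℝ)..1, deriv f (v + (t:ℂ) * w) * w = f (v + w) - f v := by
  have hfc : ContinuousOn (deriv f) U := ((hf.analyticOnNhd hU).deriv).continuousOn
  have key : ∀ t ∈ Set.uIcc (0:ℝ) 1,
      HasDerivAt (fun s : ℝ => f (v + (s:ℂ) * w)) (deriv f (v + (t:ℂ) * w) * w) t := by
    intro t ht
    rw [Set.uIcc_of_le (by norm_num)] at ht
    have hz := hseg t ht
    have hfd : HasDerivAt f (deriv f (v + (t:ℂ) * w)) (v + (t:ℂ) * w) :=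
      (hf.differentiableAt (hU.mem_nhds hz)).hasDerivAt
    exact HasDerivAt.comp t hfd (affine_hasDerivAt v w t)
  rw [integral_eq_sub_of_hasDerivAt key (edge_ii (deriv f) U hfc v w w hseg)]
  norm_num

lemma green_identity (f : ℂ → ℂ) (U : Set ℂ) (hU : IsOpen U) (hf : DifferentiableOn ℂ f U)
    (A w1 w2 : ℂ)
    (hK : ∀ t u : ℝ, t ∈ Set.Icc (0:ℝ) 1 → u ∈ Set.Icc (0:ℝ) 1 →
      A + (t:ℂ) * w1 + (u:ℂ) * w2 ∈ U) :
    (∫ t in (0:ℝ)..1, f (A + (t:ℂ) * w1 + w2) * w1) - (∫ t in (0:ℝ)..1, f (A + (t:ℂ) * w1) * w1)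
      = (∫ u in (0:ℝ)..1, f (A + w1 + (u:ℂ) * w2) * w2)
        - (∫ u in (0:ℝ)..1, f (A + (u:ℂ) * w2) * w2) := by
  have hI : Set.uIcc (0:ℝ) 1 = Set.Icc 0 1 := Set.uIcc_of_le (by norm_num)
  have h01 : (0:ℝ) ∈ Set.Icc (0:ℝ) 1 := by norm_num
  have h11 : (1:ℝ) ∈ Set.Icc (0:ℝ) 1 := by norm_num
  have hfc : ContinuousOn (deriv f) U := ((hf.analyticOnNhd hU).deriv).continuousOn
  set F : ℝ → ℝ → ℂ := fun t u => deriv f (A + (t:ℂ) * w1 + (u:ℂ) * w2) with hF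
  -- continuity of F on the square
  have hFc : ContinuousOn (fun p : ℝ × ℝ => F p.2 p.1 * w2 * w1)
      (Set.Icc (0:ℝ) 1 ×ˢ Set.Icc (0:ℝ) 1) := by
    apply ContinuousOn.mul (ContinuousOn.mul _ continuousOn_const) continuousOn_const
    apply hfc.comp
      (by fun_prop : Continuous fun p : ℝ × ℝ =>
        A + (p.2:ℂ) * w1 + (p.1:ℂ) * w2).continuousOn
    rintro ⟨u, t⟩ ⟨hu, ht⟩
    exact hK t u ht hu
  -- inner FTC in t (for fixed u)
  have ftc_t : ∀ u ∈ Set.Icc (0:ℝ) 1,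
      (∫ t in (0:ℝ)..1, F t u * w1) = f (A + w1 + (u:ℂ) * w2) - f (A + (u:ℂ) * w2) := by
    intro u hu
    have hseg : ∀ t : ℝ, t ∈ Set.Icc (0:ℝ) 1 → (A + (u:ℂ) * w2) + (t:ℂ) * w1 ∈ U := by
      intro t ht
      have h := hK t u ht hu
      rwa [show A + (t:ℂ) * w1 + (u:ℂ) * w2 = A + (u:ℂ) * w2 + (t:ℂ) * w1 from by ring] at h
    have := ftc_edge f U hU hf (A + (u:ℂ) * w2) w1 hseg
    have hcong : (∫ t in (0:ℝ)..1, F t u * w1)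
        = ∫ t in (0:ℝ)..1, deriv f ((A + (u:ℂ) * w2) + (t:ℂ) * w1) * w1 := by
      apply intervalIntegral.integral_congr
      intro t _
      simp only [hF]
      congr 2
      ring
    rw [hcong, this]
    congr 1
    ring
  -- inner FTC in u (for fixed t)
  have ftc_u : ∀ t ∈ Set.Icc (0:ℝ) 1,
      (∫ u in (0:ℝ)..1, F t u * w2) = f (A + (t:ℂ) * w1 + w2) - f (A + (t:ℂ) * w1) := by
    intro t ht
    have hseg : ∀ u : ℝ, u ∈ Set.Icc (0:ℝ) 1 → (A + (t:ℂ) * w1) + (u:ℂ) * w2 ∈ U := by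
      intro u hu
      exact hK t u ht hu
    have := ftc_edge f U hU hf (A + (t:ℂ) * w1) w2 hseg
    exact this
  -- Fubini
  have fub : (∫ u in (0:ℝ)..1, ∫ t in (0:ℝ)..1, F t u * w2 * w1)
      = ∫ t in (0:ℝ)..1, ∫ u in (0:ℝ)..1, F t u * w2 * w1 := by
    have hle : (0:ℝ) ≤ 1 := by norm_num
    simp_rw [intervalIntegral.integral_of_le hle]
    have hint : Integrable (Function.uncurry fun (u t : ℝ) => F t u * w2 * w1)
        ((volume.restrict (Set.Ioc (0:ℝ) 1)).prod (volume.restrict (Set.Ioc (0:ℝ) 1))) := by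
      rw [MeasureTheory.Measure.prod_restrict]
      apply MeasureTheory.IntegrableOn.mono_set (t := Set.Icc (0:ℝ) 1 ×ˢ Set.Icc (0:ℝ) 1)
      · exact ContinuousOn.integrableOn_compact (isCompact_Icc.prod isCompact_Icc) hFc
      · exact Set.prod_mono Set.Ioc_subset_Icc_self Set.Ioc_subset_Icc_self
    exact MeasureTheory.integral_integral_swap hint
  -- assemble
  have lhs_eq : (∫ t in (0:ℝ)..1, ∫ u in (0:ℝ)..1, F t u * w2 * w1)
      = (∫ t in (0:ℝ)..1, f (A + (t:ℂ) * w1 + w2) * w1)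
        - ∫ t in (0:ℝ)..1, f (A + (t:ℂ) * w1) * w1 := by
    have h1 : ∀ t ∈ Set.Icc (0:ℝ) 1, (∫ u in (0:ℝ)..1, F t u * w2 * w1)
        = (f (A + (t:ℂ) * w1 + w2) - f (A + (t:ℂ) * w1)) * w1 := by
      intro t ht
      rw [intervalIntegral.integral_mul_const, ftc_u t ht]
    rw [intervalIntegral.integral_congr (g := fun t : ℝ =>
        (f (A + (t:ℂ) * w1 + w2) - f (A + (t:ℂ) * w1)) * w1) (fun t ht => h1 t (hI ▸ ht))]
    simp_rw [sub_mul]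
    apply intervalIntegral.integral_sub
    · exact edge_ii' f U hf.continuousOn (fun t : ℝ => A + (t:ℂ) * w1 + w2) (by fun_prop) w1
        (fun t ht => by simpa using hK t 1 ht h11)
    · exact edge_ii' f U hf.continuousOn (fun t : ℝ => A + (t:ℂ) * w1) (by fun_prop) w1
        (fun t ht => by simpa using hK t 0 ht h01)
  have rhs_eq : (∫ u in (0:ℝ)..1, ∫ t in (0:ℝ)..1, F t u * w2 * w1)
      = (∫ u in (0:ℝ)..1, f (A + w1 + (u:ℂ) * w2) * w2)
        - ∫ u in (0:ℝ)..1, f (A + (u:ℂ) * w2) * w2 := by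
    have h1 : ∀ u ∈ Set.Icc (0:ℝ) 1, (∫ t in (0:ℝ)..1, F t u * w2 * w1)
        = (f (A + w1 + (u:ℂ) * w2) - f (A + (u:ℂ) * w2)) * w2 := by
      intro u hu
      have hre : (∫ t in (0:ℝ)..1, F t u * w2 * w1) = ∫ t in (0:ℝ)..1, F t u * w1 * w2 := by
        apply intervalIntegral.integral_congr
        intro t _
        ring
      rw [hre, intervalIntegral.integral_mul_const, ftc_t u hu]
    rw [intervalIntegral.integral_congr (g := fun u : ℝ =>
        (f (A + w1 + (u:ℂ) * w2) - f (A + (u:ℂ) * w2)) * w2) (fun u hu => h1 u (hI ▸ hu))]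
    simp_rw [sub_mul]
    apply intervalIntegral.integral_sub
    · exact edge_ii' f U hf.continuousOn (fun u : ℝ => A + w1 + (u:ℂ) * w2) (by fun_prop) w2
        (fun u hu => by
          have h := hK 1 u h11 hu
          rwa [show A + ((1:ℝ):ℂ) * w1 + (u:ℂ) * w2 = A + w1 + (u:ℂ) * w2 from by push_cast; ring]
            at h)
    · exact edge_ii' f U hf.continuousOn (fun u : ℝ => A + (u:ℂ) * w2) (by fun_prop) w2
        (fun u hu => by
          have h := hK 0 u h01 hu
          rwa [show A + ((0:ℝ):ℂ) * w1 + (u:ℂ) * w2 = A + (u:ℂ) * w2 from by push_cast; ring]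
            at h)
  rw [← lhs_eq, ← rhs_eq, fub]

set_option maxHeartbeats 1600000 in
/-- Let `P` be holomorphic and `Γ`-periodic on `ℂ∖Γ`, with `z²·P(z)` extending
holomorphically near `0` with vanishing derivative at `0` (pole of order at most two with
vanishing residue at each lattice point). If the boundary of the parallelogram
`Q = {ξ − p1 + s·ωk + t·(p1 − p2) : s, t ∈ [0,1]}` (with `ωk ∈ {1, ω}`) avoids `Γ`, then
`∫_{[ξ, ξ+ωk]} (P(ζ−p1) − P(ζ−p2)) dζ = 0`. -/
theorem stmt_7 (ω : ℂ) (hω : ω.im ≠ 0) (P : ℂ → ℂ)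
    (hP : DifferentiableOn ℂ P {z : ℂ | z ∉ lattice ω})
    (hper1 : ∀ z ∉ lattice ω, P (z + 1) = P z)
    (hperω : ∀ z ∉ lattice ω, P (z + ω) = P z)
    (hpole : ∃ V ∈ nhds (0:ℂ), ∃ g : ℂ → ℂ, DifferentiableOn ℂ g V ∧
      (∀ z ∈ V, z ≠ 0 → g z = z^2 * P z) ∧ deriv g 0 = 0)
    (p1 p2 ξ ωk : ℂ) (hωk : ωk = 1 ∨ ωk = ω)
    (hbd : ∀ s t : ℝ, s ∈ Set.Icc (0:ℝ) 1 → t ∈ Set.Icc (0:ℝ) 1 →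
      (s = 0 ∨ s = 1 ∨ t = 0 ∨ t = 1) →
      (ξ - p1 + (s : ℂ) * ωk + (t : ℂ) * (p1 - p2)) ∉ lattice ω) :
    ∫ t in (0:ℝ)..1,
      (P (ξ + (t : ℂ) * ωk - p1) - P (ξ + (t : ℂ) * ωk - p2)) * ωk = 0 := by
  classical
  obtain ⟨V, hV, g, hgdiff, hgP, hg'⟩ := hpole
  have h01 : (0:ℝ) ∈ Set.Icc (0:ℝ) 1 := by norm_num
  have h11 : (1:ℝ) ∈ Set.Icc (0:ℝ) 1 := by norm_num
  have hI : Set.uIcc (0:ℝ) 1 = Set.Icc 0 1 := Set.uIcc_of_le (by norm_num)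
  have hopen : IsOpen {z : ℂ | z ∉ lattice ω} := by
    have := (lat_closed hω).isOpen_compl
    simpa [Set.compl_def] using this
  set r₀ : ℝ := min 1 |ω.im| with hr₀def
  have hr₀ : 0 < r₀ := lt_min one_pos (abs_pos.mpr hω)
  obtain ⟨rV, hrV, hball⟩ := Metric.mem_nhds_iff.mp hV
  set a : ℂ := g 0 with hadef
  set h₀ : ℂ → ℂ := dslope (dslope g 0) 0 with hh₀def
  have h₀diff : DifferentiableOn ℂ h₀ V :=
    (Complex.differentiableOn_dslope hV).mpr ((Complex.differentiableOn_dslope hV).mpr hgdiff)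
  have hP0 : ∀ w : ℂ, w ∈ V → w ≠ 0 → P w = a / w^2 + h₀ w := by
    intro w hw hw0
    have hgw : g w = w^2 * P w := hgP w hw hw0
    have e1 : dslope g 0 w = (g w - g 0) / w := by
      rw [dslope_of_ne _ hw0, slope_def_field]; rw [sub_zero]
    have e0 : dslope g 0 0 = 0 := by rw [dslope_same]; exact hg'
    have e2 : h₀ w = ((g w - g 0) / w) / w := by
      rw [hh₀def, dslope_of_ne _ hw0, slope_def_field, e1, e0, sub_zero, sub_zero]
    rw [e2, hgw, hadef]
    field_simp
    ring
  set ρ : ℝ := min rV r₀ with hρdef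
  have hρ : 0 < ρ := lt_min hrV hr₀
  have hsep : ∀ z ∈ lattice ω, z ≠ 0 → r₀ ≤ ‖z‖ := fun z hz h0 => lat_norm hω hz h0
  have hlocal : ∀ γ ∈ lattice ω, ∀ z ∈ Metric.ball γ ρ, z ≠ γ →
      P z = a/(z-γ)^2 + h₀ (z-γ) := by
    intro γ hγ z hzball hzγ
    have hd : ‖z - γ‖ < ρ := by rwa [Metric.mem_ball, Complex.dist_eq] at hzball
    have h1 : z - γ ∉ lattice ω := by
      intro hmem
      have h2 := hsep _ hmem (sub_ne_zero.mpr hzγ)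
      have h3 : ρ ≤ r₀ := min_le_right _ _
      linarith
    have h2 : P z = P (z - γ) := by
      have := per_lat P hper1 hperω γ hγ (z - γ) h1
      rw [sub_add_cancel] at this
      exact this
    rw [h2]
    apply hP0 _ (hball ?_) (sub_ne_zero.mpr hzγ)
    rw [Metric.mem_ball, Complex.dist_eq, sub_zero]
    have h3 : ρ ≤ rV := min_le_left _ _
    linarith
  -- geometry
  set A : ℂ := ξ - p1 with hAdef
  set w2 : ℂ := p1 - p2 with hw2def
  set Qb : Set ℂ :=
    (fun p : ℝ × ℝ => A + (p.1:ℂ) * ωk + (p.2:ℂ) * w2) '' (Set.Icc 0 1 ×ˢ Set.Icc 0 1)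
    with hQbdef
  have hQb : IsCompact Qb := (isCompact_Icc.prod isCompact_Icc).image (by fun_prop)
  set U : Set ℂ := Metric.thickening (ρ/2) Qb with hUdef
  have hUopen : IsOpen U := Metric.isOpen_thickening
  have hQU : Qb ⊆ U := Metric.self_subset_thickening (by linarith) _
  have hSfin : (lattice ω ∩ Metric.cthickening (ρ/2) Qb).Finite := lat_finite hω hQb.cthickening
  set S : Finset ℂ := hSfin.toFinset with hSdef
  have hUS : ∀ z ∈ U, z ∈ lattice ω → z ∈ S := fun z hzU hzΓ =>
    hSfin.mem_toFinset.mpr ⟨hzΓ, Metric.thickening_subset_cthickening _ _ hzU⟩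
  have hSΓ : ∀ γ ∈ S, γ ∈ lattice ω := fun γ hγ => (hSfin.mem_toFinset.mp hγ).1
  -- the regularized function hh
  set hh : ℂ → ℂ := fun z => if z ∈ lattice ω then h₀ 0 - ∑ γ ∈ S.erase z, a/(z-γ)^2
      else P z - ∑ γ ∈ S, a/(z-γ)^2 with hhdef
  have hhP : ∀ z, z ∉ lattice ω → P z = hh z + ∑ γ ∈ S, a/(z-γ)^2 := by
    intro z hz
    rw [hhdef]
    simp only [if_neg hz]
    ring
  have hhdiff : DifferentiableOn ℂ hh U := by
    intro z₀ hz₀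
    by_cases hzΓ : z₀ ∈ lattice ω
    · have hz₀S : z₀ ∈ S := hUS z₀ hz₀ hzΓ
      have heq : Set.EqOn hh (fun z => h₀ (z - z₀) - ∑ γ ∈ S.erase z₀, a/(z-γ)^2)
          (Metric.ball z₀ ρ) := by
        intro z hz
        by_cases hzz : z = z₀
        · subst hzz
          rw [hhdef]
          simp only [if_pos hzΓ, sub_self]
        · have hd : ‖z - z₀‖ < ρ := by rwa [Metric.mem_ball, Complex.dist_eq] at hz
          have hzΓ' : z ∉ lattice ω := by
            intro hmem
            have h1 : z - z₀ ∈ lattice ω := lat_sub hmem hzΓ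
            have h2 := hsep _ h1 (sub_ne_zero.mpr hzz)
            have h3 : ρ ≤ r₀ := min_le_right _ _
            linarith
          have hloc := hlocal z₀ hzΓ z hz hzz
          simp only [hhdef, if_neg hzΓ']
          rw [hloc, ← Finset.sum_erase_add S _ hz₀S]
          ring
      have hdiff2 : DifferentiableAt ℂ
          (fun z => h₀ (z - z₀) - ∑ γ ∈ S.erase z₀, a/(z-γ)^2) z₀ := by
        apply DifferentiableAt.sub
        · have h1 : DifferentiableAt ℂ h₀ (z₀ - z₀) := by
            rw [sub_self]; exact h₀diff.differentiableAt hV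
          exact DifferentiableAt.comp z₀ h1 (differentiableAt_id.sub_const z₀)
        · apply DifferentiableAt.fun_sum
          intro γ hγ
          have hne : z₀ - γ ≠ 0 := sub_ne_zero.mpr (Finset.ne_of_mem_erase hγ).symm
          exact (differentiableAt_const a).div ((differentiableAt_id.sub_const γ).pow 2)
            (pow_ne_zero 2 hne)
      have hev : hh =ᶠ[nhds z₀] (fun z => h₀ (z - z₀) - ∑ γ ∈ S.erase z₀, a/(z-γ)^2) :=
        Filter.eventuallyEq_of_mem (Metric.ball_mem_nhds z₀ hρ) heq
      exact ((hev.differentiableAt_iff).mpr hdiff2).differentiableWithinAt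
    · have heq : Set.EqOn hh (fun z => P z - ∑ γ ∈ S, a/(z-γ)^2) {z : ℂ | z ∉ lattice ω} := by
        intro z hz
        simp only [hhdef, if_neg hz]
      have hdiff2 : DifferentiableAt ℂ (fun z => P z - ∑ γ ∈ S, a/(z-γ)^2) z₀ := by
        apply DifferentiableAt.sub
        · exact hP.differentiableAt (hopen.mem_nhds hzΓ)
        · apply DifferentiableAt.fun_sum
          intro γ hγ
          have hne : z₀ - γ ≠ 0 := sub_ne_zero.mpr (fun h => hzΓ (h ▸ hSΓ γ hγ))
          exact (differentiableAt_const a).div ((differentiableAt_id.sub_const γ).pow 2)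
            (pow_ne_zero 2 hne)
      have hev : hh =ᶠ[nhds z₀] (fun z => P z - ∑ γ ∈ S, a/(z-γ)^2) :=
        Filter.eventuallyEq_of_mem (hopen.mem_nhds hzΓ) heq
      exact ((hev.differentiableAt_iff).mpr hdiff2).differentiableWithinAt
  -- boundary avoidance facts
  have hbot : ∀ t : ℝ, t ∈ Set.Icc (0:ℝ) 1 → A + (t:ℂ) * ωk ∉ lattice ω := by
    intro t ht
    have h := hbd t 0 ht h01 (Or.inr (Or.inr (Or.inl rfl)))
    rw [show A + (t:ℂ) * ωk + ((0:ℝ):ℂ) * w2 = A + (t:ℂ) * ωk from by push_cast; ring] at h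
    exact h
  have htop : ∀ t : ℝ, t ∈ Set.Icc (0:ℝ) 1 → (A + w2) + (t:ℂ) * ωk ∉ lattice ω := by
    intro t ht
    have h := hbd t 1 ht h11 (Or.inr (Or.inr (Or.inr rfl)))
    rw [show A + (t:ℂ) * ωk + ((1:ℝ):ℂ) * w2 = (A + w2) + (t:ℂ) * ωk from by push_cast; ring] at h
    exact h
  have hleft : ∀ u : ℝ, u ∈ Set.Icc (0:ℝ) 1 → A + (u:ℂ) * w2 ∉ lattice ω := by
    intro u hu
    have h := hbd 0 u h01 hu (Or.inl rfl)
    rw [show A + ((0:ℝ):ℂ) * ωk + (u:ℂ) * w2 = A + (u:ℂ) * w2 from by push_cast; ring] at h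
    exact h
  have hright : ∀ u : ℝ, u ∈ Set.Icc (0:ℝ) 1 → (A + ωk) + (u:ℂ) * w2 ∉ lattice ω := by
    intro u hu
    have h := hbd 1 u h11 hu (Or.inr (Or.inl rfl))
    rw [show A + ((1:ℝ):ℂ) * ωk + (u:ℂ) * w2 = (A + ωk) + (u:ℂ) * w2 from by push_cast; ring] at h
    exact h
  -- membership facts
  have hK : ∀ t u : ℝ, t ∈ Set.Icc (0:ℝ) 1 → u ∈ Set.Icc (0:ℝ) 1 →
      A + (t:ℂ) * ωk + (u:ℂ) * w2 ∈ U :=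
    fun t u ht hu => hQU ⟨(t, u), ⟨ht, hu⟩, rfl⟩
  have hKbot : ∀ t : ℝ, t ∈ Set.Icc (0:ℝ) 1 → A + (t:ℂ) * ωk ∈ U := by
    intro t ht
    have h := hK t 0 ht h01
    rwa [show A + (t:ℂ) * ωk + ((0:ℝ):ℂ) * w2 = A + (t:ℂ) * ωk from by push_cast; ring] at h
  have hKtop : ∀ t : ℝ, t ∈ Set.Icc (0:ℝ) 1 → (A + w2) + (t:ℂ) * ωk ∈ U := by
    intro t ht
    have h := hK t 1 ht h11
    rwa [show A + (t:ℂ) * ωk + ((1:ℝ):ℂ) * w2 = (A + w2) + (t:ℂ) * ωk from by push_cast; ring] at h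
  have hKleft : ∀ u : ℝ, u ∈ Set.Icc (0:ℝ) 1 → A + (u:ℂ) * w2 ∈ U := by
    intro u hu
    have h := hK 0 u h01 hu
    rwa [show A + ((0:ℝ):ℂ) * ωk + (u:ℂ) * w2 = A + (u:ℂ) * w2 from by push_cast; ring] at h
  have hKright : ∀ u : ℝ, u ∈ Set.Icc (0:ℝ) 1 → (A + ωk) + (u:ℂ) * w2 ∈ U := by
    intro u hu
    have h := hK 1 u h11 hu
    rwa [show A + ((1:ℝ):ℂ) * ωk + (u:ℂ) * w2 = (A + ωk) + (u:ℂ) * w2 from by push_cast; ring] at h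
  have hhcont : ContinuousOn hh U := hhdiff.continuousOn
  -- generic edge splitting
  have edge_split : ∀ v w : ℂ, (∀ t : ℝ, t ∈ Set.Icc (0:ℝ) 1 → v + (t:ℂ) * w ∉ lattice ω) →
      (∀ t : ℝ, t ∈ Set.Icc (0:ℝ) 1 → v + (t:ℂ) * w ∈ U) →
      (∫ t in (0:ℝ)..1, P (v + (t:ℂ) * w) * w)
        = (∫ t in (0:ℝ)..1, hh (v + (t:ℂ) * w) * w)
          + ∑ γ ∈ S, (a/(v-γ) - a/(v+w-γ)) := by
    intro v w hav hin
    have hne : ∀ γ ∈ S, ∀ t : ℝ, t ∈ Set.Icc (0:ℝ) 1 → v + (t:ℂ) * w ≠ γ := by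
      intro γ hγ t ht heq
      exact hav t ht (heq ▸ hSΓ γ hγ)
    have hcong : Set.EqOn (fun t : ℝ => P (v + (t:ℂ) * w) * w)
        (fun t : ℝ => hh (v + (t:ℂ) * w) * w + ∑ γ ∈ S, a/(v + (t:ℂ) * w - γ)^2 * w)
        (Set.uIcc (0:ℝ) 1) := by
      intro t ht
      rw [hI] at ht
      simp only
      rw [hhP _ (hav t ht), add_mul, Finset.sum_mul]
    rw [intervalIntegral.integral_congr hcong]
    have hint1 : IntervalIntegrable (fun t : ℝ => hh (v + (t:ℂ) * w) * w) volume 0 1 :=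
      edge_ii' hh U hhcont _ (by fun_prop) w hin
    have hint2 : ∀ γ ∈ S, IntervalIntegrable (fun t : ℝ => a/(v + (t:ℂ) * w - γ)^2 * w)
        volume 0 1 := by
      intro γ hγ
      apply ContinuousOn.intervalIntegrable
      rw [hI]
      apply ContinuousOn.mul _ continuousOn_const
      apply ContinuousOn.div continuousOn_const
      · fun_prop
      · intro t ht
        exact pow_ne_zero 2 (sub_ne_zero.mpr (hne γ hγ t ht))
    have hint3 : IntervalIntegrable
        (fun t : ℝ => ∑ γ ∈ S, a/(v + (t:ℂ) * w - γ)^2 * w) volume 0 1 := by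
      apply ContinuousOn.intervalIntegrable
      rw [hI]
      apply continuousOn_finset_sum
      intro γ hγ
      apply ContinuousOn.mul _ continuousOn_const
      apply ContinuousOn.div continuousOn_const
      · fun_prop
      · intro t ht
        exact pow_ne_zero 2 (sub_ne_zero.mpr (hne γ hγ t ht))
    rw [intervalIntegral.integral_add hint1 hint3,
      intervalIntegral.integral_finset_sum hint2]
    congr 1
    exact Finset.sum_congr rfl (fun γ hγ => pole_edge a γ v w (hne γ hγ))
  have ES_B := edge_split A ωk hbot hKbot
  have ES_T := edge_split (A + w2) ωk htop hKtop
  have ES_L := edge_split A w2 hleft hKleft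
  have ES_R := edge_split (A + ωk) w2 hright hKright
  have hgreen := green_identity hh U hUopen hhdiff A ωk w2 hK
  -- bridge the top-edge forms
  have brP : (∫ t in (0:ℝ)..1, P ((A + w2) + (t:ℂ) * ωk) * ωk)
      = ∫ t in (0:ℝ)..1, P (A + (t:ℂ) * ωk + w2) * ωk := by
    apply intervalIntegral.integral_congr
    intro t _
    simp only
    rw [show (A + w2) + (t:ℂ) * ωk = A + (t:ℂ) * ωk + w2 from by ring]
  have brH : (∫ t in (0:ℝ)..1, hh ((A + w2) + (t:ℂ) * ωk) * ωk)
      = ∫ t in (0:ℝ)..1, hh (A + (t:ℂ) * ωk + w2) * ωk := by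
    apply intervalIntegral.integral_congr
    intro t _
    simp only
    rw [show (A + w2) + (t:ℂ) * ωk = A + (t:ℂ) * ωk + w2 from by ring]
  -- periodicity kills the side edges
  have hper : (∫ u in (0:ℝ)..1, P ((A + ωk) + (u:ℂ) * w2) * w2)
      = ∫ u in (0:ℝ)..1, P (A + (u:ℂ) * w2) * w2 := by
    apply intervalIntegral.integral_congr
    intro u hu
    rw [hI] at hu
    simp only
    congr 1
    have h1 : A + (u:ℂ) * w2 ∉ lattice ω := hleft u hu
    rw [show (A + ωk) + (u:ℂ) * w2 = (A + (u:ℂ) * w2) + ωk from by ring]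
    rcases hωk with h | h
    · rw [h]; exact hper1 _ h1
    · rw [h]; exact hperω _ h1
  -- the pole contributions telescope
  have hzero : (∑ γ ∈ S, (a/(A-γ) - a/(A+ωk-γ)))
      + (∑ γ ∈ S, (a/((A+ωk)-γ) - a/((A+ωk)+w2-γ)))
      - (∑ γ ∈ S, (a/((A+w2)-γ) - a/((A+w2)+ωk-γ)))
      - (∑ γ ∈ S, (a/(A-γ) - a/(A+w2-γ))) = 0 := by
    rw [← Finset.sum_add_distrib, ← Finset.sum_sub_distrib, ← Finset.sum_sub_distrib]
    apply Finset.sum_eq_zero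
    intro γ _
    ring
  -- rewrite the target
  have htarget : (∫ t in (0:ℝ)..1, (P (ξ + (t:ℂ) * ωk - p1) - P (ξ + (t:ℂ) * ωk - p2)) * ωk)
      = (∫ t in (0:ℝ)..1, P (A + (t:ℂ) * ωk) * ωk)
        - ∫ t in (0:ℝ)..1, P (A + (t:ℂ) * ωk + w2) * ωk := by
    have hcong : Set.EqOn (fun t : ℝ => (P (ξ + (t:ℂ) * ωk - p1) - P (ξ + (t:ℂ) * ωk - p2)) * ωk)
        (fun t : ℝ => P (A + (t:ℂ) * ωk) * ωk - P (A + (t:ℂ) * ωk + w2) * ωk)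
        (Set.uIcc (0:ℝ) 1) := by
      intro t _
      simp only
      rw [show ξ + (t:ℂ) * ωk - p1 = A + (t:ℂ) * ωk from by rw [hAdef]; ring,
        show ξ + (t:ℂ) * ωk - p2 = A + (t:ℂ) * ωk + w2 from by rw [hAdef, hw2def]; ring]
      ring
    rw [intervalIntegral.integral_congr hcong]
    apply intervalIntegral.integral_sub
    · exact edge_ii' P {z | z ∉ lattice ω} hP.continuousOn _ (by fun_prop) ωk
        (fun t ht => hbot t ht)
    · exact edge_ii' P {z | z ∉ lattice ω} hP.continuousOn
        (fun t : ℝ => A + (t:ℂ) * ωk + w2) (by fun_prop) ωk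
        (fun t ht => by
          have h := htop t ht
          rwa [show (A + w2) + (t:ℂ) * ωk = A + (t:ℂ) * ωk + w2 from by ring] at h)
  rw [htarget]
  rw [brP, brH] at ES_T
  linear_combination ES_B - ES_T - hgreen + ES_R - ES_L - hper + hzero
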